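/- Let α(φ, θ) = cos²(θ/2)·e^{−iφ/2} + sin²(θ/2)·e^{iφ/2} and let s ∈ ℤ. Then the function φ ↦ (α(φ,θ)²/|α(φ,θ)|²)^s satisfies: its first derivative at φ = 0 equals −is·cos θ and its second derivative at φ = 0 equals −s²·cos²θ. -/

import Mathlib

/-- `α(φ,θ) = cos²(θ/2)·e^{−iφ/2} + sin²(θ/2)·e^{iφ/2}`. -/
noncomputable def alphaFun (θ φ : ℝ) : ℂ :=
  (Real.cos (θ / 2) : ℂ) ^ 2 * Complex.exp (-Complex.I * φ / 2) +
    (Real.sin (θ / 2) : ℂ) ^ 2 * Complex.exp (Complex.I * φ / 2)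

noncomputable def Af (θ φ : ℝ) : ℂ :=
  (Real.cos (φ / 2) : ℂ) - Complex.I * (Real.cos θ : ℂ) * (Real.sin (φ / 2) : ℂ)

noncomputable def Nf (θ φ : ℝ) : ℝ :=
  Real.cos (φ / 2) ^ 2 + Real.cos θ ^ 2 * Real.sin (φ / 2) ^ 2

lemma alpha_eq (θ φ : ℝ) : alphaFun θ φ = Af θ φ := by
  have h1 : (Real.cos (θ/2) : ℂ)^2 + (Real.sin (θ/2) : ℂ)^2 = 1 := by
    exact_mod_cast congrArg (Complex.ofReal ·) (Real.cos_sq_add_sin_sq (θ/2))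
  have h2 : (Real.cos (θ/2) : ℂ)^2 - (Real.sin (θ/2) : ℂ)^2 = (Real.cos θ : ℂ) := by
    have := Real.cos_two_mul' (θ/2)
    rw [show 2 * (θ/2) = θ by ring] at this
    exact_mod_cast congrArg (Complex.ofReal ·) this.symm
  unfold alphaFun Af
  rw [show (-Complex.I * φ / 2 : ℂ) = ((-(φ/2) : ℝ) : ℂ) * Complex.I by push_cast; ring,
      show (Complex.I * φ / 2 : ℂ) = (((φ/2) : ℝ) : ℂ) * Complex.I by push_cast; ring,
      Complex.exp_mul_I, Complex.exp_mul_I]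
  rw [show ((-(φ/2):ℝ) : ℂ) = -((φ/2 : ℝ) : ℂ) by push_cast; ring]
  rw [Complex.cos_neg, Complex.sin_neg, ← Complex.ofReal_cos, ← Complex.ofReal_sin]
  linear_combination (Real.cos (φ/2) : ℂ) * h1 - Complex.I * (Real.sin (φ/2) : ℂ) * h2

lemma normSq_Af (θ φ : ℝ) : Complex.normSq (Af θ φ) = Nf θ φ := by
  simp only [Af, Nf, Complex.normSq_apply, Complex.sub_re, Complex.sub_im, Complex.ofReal_re,
    Complex.ofReal_im, Complex.mul_re, Complex.mul_im, Complex.I_re, Complex.I_im]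
  ring

lemma absSq_alpha (θ φ : ℝ) : ((‖alphaFun θ φ‖ : ℂ)) ^ 2 = (Nf θ φ : ℂ) := by
  rw [alpha_eq]
  rw [show ((‖Af θ φ‖ : ℂ))^2 = ((‖Af θ φ‖^2 : ℝ) : ℂ) by push_cast; ring]
  rw [Complex.sq_norm, normSq_Af]

noncomputable def gf (θ φ : ℝ) : ℂ := Af θ φ ^ 2 / (Nf θ φ : ℂ)

noncomputable def A1 (θ φ : ℝ) : ℂ :=
  -(Real.sin (φ / 2) : ℂ) / 2 - Complex.I * (Real.cos θ : ℂ) * ((Real.cos (φ / 2) : ℂ) / 2)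

noncomputable def A2 (θ φ : ℝ) : ℂ :=
  -(Real.cos (φ / 2) : ℂ) / 4 + Complex.I * (Real.cos θ : ℂ) * ((Real.sin (φ / 2) : ℂ) / 4)

noncomputable def N1 (θ φ : ℝ) : ℝ :=
  (Real.cos θ ^ 2 - 1) * (Real.sin (φ / 2) * Real.cos (φ / 2))

noncomputable def N2 (θ φ : ℝ) : ℝ :=
  (Real.cos θ ^ 2 - 1) * (Real.cos (φ / 2) ^ 2 - Real.sin (φ / 2) ^ 2) / 2

noncomputable def g1 (θ φ : ℝ) : ℂ :=
  (2 * Af θ φ * A1 θ φ * (Nf θ φ : ℂ) - Af θ φ ^ 2 * (N1 θ φ : ℂ)) / ((Nf θ φ : ℂ)) ^ 2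

lemma hasDerivAt_half (φ : ℝ) : HasDerivAt (fun x : ℝ => x / 2) (1 / 2 : ℝ) φ := by
  simpa using (hasDerivAt_id φ).div_const 2

lemma hasDerivAt_C (φ : ℝ) :
    HasDerivAt (fun x : ℝ => Real.cos (x / 2)) (-Real.sin (φ / 2) * (1 / 2)) φ :=
  by have := (Real.hasDerivAt_cos (φ / 2)).comp φ (hasDerivAt_half φ); exact this

lemma hasDerivAt_S (φ : ℝ) :
    HasDerivAt (fun x : ℝ => Real.sin (x / 2)) (Real.cos (φ / 2) * (1 / 2)) φ :=
  by have := (Real.hasDerivAt_sin (φ / 2)).comp φ (hasDerivAt_half φ); exact this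

lemma hasDerivAt_Af (θ φ : ℝ) : HasDerivAt (Af θ) (A1 θ φ) φ := by
  unfold Af A1
  have h := ((hasDerivAt_C φ).ofReal_comp).sub
    ((((hasDerivAt_S φ).ofReal_comp)).const_mul (Complex.I * (Real.cos θ : ℂ)))
  convert h using 1 <;>
    first
      | (funext x; simp only [Pi.add_apply, Pi.sub_apply, Pi.mul_apply, Pi.div_apply, Pi.neg_apply, Pi.pow_apply] <;> push_cast <;> ring)
      | (funext x; push_cast; ring)
      | (push_cast; ring)
      | rfl

lemma hasDerivAt_A1 (θ φ : ℝ) : HasDerivAt (A1 θ) (A2 θ φ) φ := by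
  unfold A1 A2
  have h := (((hasDerivAt_S φ).ofReal_comp).div_const 2).neg.sub
    ((((hasDerivAt_C φ).ofReal_comp).div_const 2).const_mul (Complex.I * (Real.cos θ : ℂ)))
  convert h using 1 <;>
    first
      | (funext x; simp only [Pi.add_apply, Pi.sub_apply, Pi.mul_apply, Pi.div_apply, Pi.neg_apply, Pi.pow_apply] <;> push_cast <;> ring)
      | (funext x; push_cast; ring)
      | (push_cast; ring)
      | rfl

lemma hasDerivAt_Nf (θ φ : ℝ) : HasDerivAt (Nf θ) (N1 θ φ) φ := by
  unfold Nf N1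
  have h := ((hasDerivAt_C φ).pow 2).add (((hasDerivAt_S φ).pow 2).const_mul (Real.cos θ ^ 2))
  convert h using 1 <;>
    first
      | (funext x; simp only [Pi.add_apply, Pi.sub_apply, Pi.mul_apply, Pi.div_apply, Pi.neg_apply, Pi.pow_apply] <;> push_cast <;> ring)
      | (funext x; push_cast; ring)
      | (push_cast; ring)
      | rfl

lemma hasDerivAt_N1 (θ φ : ℝ) : HasDerivAt (N1 θ) (N2 θ φ) φ := by
  unfold N1 N2
  have h := (((hasDerivAt_S φ).mul (hasDerivAt_C φ))).const_mul (Real.cos θ ^ 2 - 1)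
  convert h using 1 <;>
    first
      | (funext x; simp only [Pi.add_apply, Pi.sub_apply, Pi.mul_apply, Pi.div_apply, Pi.neg_apply, Pi.pow_apply] <;> push_cast <;> ring)
      | ring
      | (funext x; ring)
      | rfl

lemma Nf_pos (θ : ℝ) {φ : ℝ} (h : φ ∈ Set.Ioo (-Real.pi) Real.pi) : 0 < Nf θ φ := by
  have hc : 0 < Real.cos (φ / 2) := by
    apply Real.cos_pos_of_mem_Ioo
    constructor <;> [linarith [h.1]; linarith [h.2]]
  have h1 : 0 < Real.cos (φ / 2) ^ 2 := by positivity
  have h2 : 0 ≤ (Real.cos θ * Real.sin (φ / 2)) ^ 2 := sq_nonneg _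
  unfold Nf; nlinarith

lemma Af_ne_zero (θ : ℝ) {φ : ℝ} (h : 0 < Nf θ φ) : Af θ φ ≠ 0 := by
  intro h0
  rw [← normSq_Af θ φ] at h
  simp [h0] at h

lemma hasDerivAt_Af_sq (θ φ : ℝ) :
    HasDerivAt (fun x => Af θ x ^ 2) (2 * Af θ φ * A1 θ φ) φ := by
  have h := (hasDerivAt_Af θ φ).mul (hasDerivAt_Af θ φ)
  convert h using 1 <;> first | (funext x; simp only [Pi.add_apply, Pi.sub_apply, Pi.mul_apply, Pi.div_apply, Pi.neg_apply, Pi.pow_apply] <;> push_cast <;> ring) | (funext x; ring) | ring | rfl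

lemma hasDerivAt_Nfc_sq (θ φ : ℝ) :
    HasDerivAt (fun x => ((Nf θ x : ℂ)) ^ 2) (2 * (Nf θ φ : ℂ) * (N1 θ φ : ℂ)) φ := by
  have h := ((hasDerivAt_Nf θ φ).ofReal_comp).mul ((hasDerivAt_Nf θ φ).ofReal_comp)
  convert h using 1 <;> first | (funext x; simp only [Pi.add_apply, Pi.sub_apply, Pi.mul_apply, Pi.div_apply, Pi.neg_apply, Pi.pow_apply] <;> push_cast <;> ring) | (funext x; ring) | ring | rfl

lemma hasDerivAt_gf (θ : ℝ) {φ : ℝ} (h : Nf θ φ ≠ 0) : HasDerivAt (gf θ) (g1 θ φ) φ := by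
  have hN : ((Nf θ φ : ℂ)) ≠ 0 := Complex.ofReal_ne_zero.mpr h
  have hd := (hasDerivAt_Af_sq θ φ).div ((hasDerivAt_Nf θ φ).ofReal_comp) hN
  unfold gf g1
  convert hd using 1 <;>
    first
      | (funext x; simp only [Pi.add_apply, Pi.sub_apply, Pi.mul_apply, Pi.div_apply, Pi.neg_apply, Pi.pow_apply] <;> push_cast <;> ring)
      | (funext x; push_cast; ring)
      | (push_cast; ring)
      | rfl

lemma gf_ne_zero (θ : ℝ) {φ : ℝ} (h : 0 < Nf θ φ) : gf θ φ ≠ 0 := by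
  have hN : ((Nf θ φ : ℂ)) ≠ 0 := Complex.ofReal_ne_zero.mpr h.ne'
  exact div_ne_zero (pow_ne_zero 2 (Af_ne_zero θ h)) hN

lemma hasDerivAt_zf (θ : ℝ) (m : ℤ) {φ : ℝ} (h : 0 < Nf θ φ) :
    HasDerivAt (fun x => gf θ x ^ m) ((m : ℂ) * gf θ φ ^ (m - 1) * g1 θ φ) φ := by
  have h1 := (hasDerivAt_zpow m (gf θ φ) (Or.inl (gf_ne_zero θ h))).comp φ
    (hasDerivAt_gf θ h.ne')
  convert h1 using 1 <;> first | rfl | ring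

lemma Af_zero (θ : ℝ) : Af θ 0 = 1 := by simp [Af]
lemma A1_zero (θ : ℝ) : A1 θ 0 = -Complex.I * (Real.cos θ : ℂ) / 2 := by simp [A1]; ring
lemma A2_zero (θ : ℝ) : A2 θ 0 = -(1 / 4) := by simp [A2]; norm_num
lemma Nf_zero (θ : ℝ) : Nf θ 0 = 1 := by simp [Nf]
lemma N1_zero (θ : ℝ) : N1 θ 0 = 0 := by simp [N1]
lemma N2_zero (θ : ℝ) : N2 θ 0 = (Real.cos θ ^ 2 - 1) / 2 := by simp [N2]
lemma gf_zero (θ : ℝ) : gf θ 0 = 1 := by simp [gf, Af_zero, Nf_zero]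
lemma g1_zero (θ : ℝ) : g1 θ 0 = -Complex.I * (Real.cos θ : ℂ) := by
  simp [g1, Af_zero, A1_zero, Nf_zero, N1_zero]; ring

/-- for `s ∈ ℤ`, the function `φ ↦ (α(φ,θ)²/|α(φ,θ)|²)^s` has first
derivative `−is·cos θ` at `φ = 0` and second derivative `−s²·cos²θ` at `φ = 0`. -/
theorem stmt15 (θ : ℝ) (s : ℤ) :
    deriv (fun φ : ℝ => (alphaFun θ φ ^ 2 / ((‖alphaFun θ φ‖ : ℂ)) ^ 2) ^ s) 0
        = -Complex.I * (s : ℂ) * (Real.cos θ : ℂ) ∧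
    iteratedDeriv 2
        (fun φ : ℝ => (alphaFun θ φ ^ 2 / ((‖alphaFun θ φ‖ : ℂ)) ^ 2) ^ s) 0
        = -(s : ℂ) ^ 2 * (Real.cos θ : ℂ) ^ 2 := by
  have feq : (fun φ : ℝ => (alphaFun θ φ ^ 2 / ((‖alphaFun θ φ‖ : ℂ)) ^ 2) ^ s)
      = fun φ : ℝ => gf θ φ ^ s := by
    funext φ
    rw [absSq_alpha, alpha_eq]
    rfl
  have h0mem : (0:ℝ) ∈ Set.Ioo (-Real.pi) Real.pi :=
    ⟨by linarith [Real.pi_pos], Real.pi_pos⟩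
  have hI : Set.Ioo (-Real.pi) Real.pi ∈ nhds (0:ℝ) :=
    Ioo_mem_nhds h0mem.1 h0mem.2
  have hderiv : ∀ x ∈ Set.Ioo (-Real.pi) Real.pi,
      HasDerivAt (fun φ : ℝ => gf θ φ ^ s) ((s : ℂ) * gf θ x ^ (s - 1) * g1 θ x) x :=
    fun x hx => hasDerivAt_zf θ s (Nf_pos θ hx)
  rw [feq]
  constructor
  · rw [(hderiv 0 h0mem).deriv, gf_zero, g1_zero, one_zpow]
    ring
  · rw [iteratedDeriv_succ, iteratedDeriv_one]
    have hev : deriv (fun φ : ℝ => gf θ φ ^ s)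
        =ᶠ[nhds (0:ℝ)] fun x => (s : ℂ) * gf θ x ^ (s - 1) * g1 θ x :=
      Filter.eventuallyEq_of_mem hI fun x hx => (hderiv x hx).deriv
    rw [hev.deriv_eq]
    -- second derivative at 0
    have hpos : 0 < Nf θ 0 := Nf_pos θ h0mem
    have hN : ((Nf θ 0 : ℂ)) ≠ 0 := Complex.ofReal_ne_zero.mpr hpos.ne'
    have hA := hasDerivAt_Af θ 0
    have hA1 := hasDerivAt_A1 θ 0
    have hN' := (hasDerivAt_Nf θ 0).ofReal_comp
    have hN1 := (hasDerivAt_N1 θ 0).ofReal_comp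
    -- numerator u = 2*Af*A1*↑Nf - Af^2*↑N1
    have hu := (((hA.const_mul 2).mul hA1).mul hN').sub ((hasDerivAt_Af_sq θ 0).mul hN1)
    -- denominator v = (↑Nf)^2
    have hv := hasDerivAt_Nfc_sq θ 0
    have hvne : ((Nf θ 0 : ℂ)) ^ 2 ≠ 0 := pow_ne_zero _ hN
    have hg1 : HasDerivAt (g1 θ)
        ((((2 * A1 θ 0 * A1 θ 0 + 2 * Af θ 0 * A2 θ 0) * (Nf θ 0 : ℂ)
            + 2 * Af θ 0 * A1 θ 0 * (N1 θ 0 : ℂ)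
            - (2 * Af θ 0 * A1 θ 0 * (N1 θ 0 : ℂ) + Af θ 0 ^ 2 * (N2 θ 0 : ℂ)))
              * ((Nf θ 0 : ℂ)) ^ 2
          - (2 * Af θ 0 * A1 θ 0 * (Nf θ 0 : ℂ) - Af θ 0 ^ 2 * (N1 θ 0 : ℂ))
              * (2 * (Nf θ 0 : ℂ) * (N1 θ 0 : ℂ)))
          / (((Nf θ 0 : ℂ)) ^ 2) ^ 2) 0 := by
      have hd := hu.div hv hvne
      unfold g1
      convert hd using 1 <;>
        first
          | (funext x; simp only [Pi.add_apply, Pi.sub_apply, Pi.mul_apply, Pi.div_apply, Pi.neg_apply, Pi.pow_apply] <;> push_cast <;> ring)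
          | (simp only [Pi.add_apply, Pi.sub_apply, Pi.mul_apply, Pi.div_apply, Pi.neg_apply, Pi.pow_apply] <;> push_cast <;> ring)
          | (funext x; push_cast; ring)
          | (push_cast; ring)
            | rfl
    have hz := hasDerivAt_zf θ (s - 1) hpos
    have hD := ((hz.const_mul ((s : ℂ))).mul hg1)
    rw [HasDerivAt.deriv (f := fun x => (s : ℂ) * gf θ x ^ (s - 1) * g1 θ x) hD]
    rw [Af_zero, A1_zero, A2_zero, Nf_zero, N1_zero, N2_zero, gf_zero, g1_zero,
      one_zpow, one_zpow]
    push_cast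
    simp only [← Complex.ofReal_cos]
    ring_nf
    simp only [Complex.I_sq]
    ring
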